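/- The following hold: (i) sup over x ≥ 0, δ ≥ 0, σ > 0 of G(x, δ, σ) equals R; (ii) U^{out,*}(γ) ≤ R − 1 for every γ ≥ 0. Consequently there exist a threshold δ ≥ 0 and noise σ > 0 such that the optimal opt-in utility satisfies U*(δ, σ) > R − 1 ≥ U^{out,*}(γ) for every γ ≥ 0; i.e., there exists an audit (a pair of test parameters) ensuring full coverage: every vendor type prefers to participate. -/

import Mathlib

open ProbabilityTheory

/-- The cumulative distribution function of the standard normal distribution. -/
noncomputable def stdNormalCDF : ℝ → ℝ :=
  fun t => ProbabilityTheory.cdf (ProbabilityTheory.gaussianReal 0 1) t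

/-- The test function `p(x; δ, σ) := 1 − Φ((δ − x)/σ)`. -/
noncomputable def testFn (δ σ x : ℝ) : ℝ := 1 - stdNormalCDF ((δ - x) / σ)

/-- `G(x, δ, σ) := −c·x + p(x;δ,σ)·R/(1 − α + α·p(x;δ,σ))`. -/
noncomputable def Gfun (α c R δ σ x : ℝ) : ℝ :=
  -c * x + testFn δ σ x * R / (1 - α + α * testFn δ σ x)

/-- The optimal opt-in utility `U*(δ,σ) := sup_{x ≥ 0} G(x,δ,σ)`. -/
noncomputable def optIn (α c R δ σ : ℝ) : ℝ :=
  sSup ((fun x => Gfun α c R δ σ x) '' {x | 0 ≤ x})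

/-- The optimal opt-out utility
`U^{out,*}(γ) := sup_{x ≥ 0} [R − c·x − exp (γ μZ x + γ² σZ x² / 2)]`. -/
noncomputable def optOut (R c : ℝ) (μZ σZ : ℝ → ℝ) (γ : ℝ) : ℝ :=
  sSup ((fun x => R - c * x - Real.exp (γ * μZ x + γ ^ 2 * (σZ x) ^ 2 / 2)) '' {x | 0 ≤ x})

/-- Let `α ∈ (0,1)`, `c > 0`, `R > 0`, and `μZ, σZ : [0,∞) → [0,∞)`.
Then: (i) the supremum of `G(x,δ,σ)` over `x ≥ 0`, `δ ≥ 0`, `σ > 0` equals `R`;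
(ii) `U^{out,*}(γ) ≤ R − 1` for every `γ ≥ 0`; and consequently there exist a
threshold `δ ≥ 0` and a noise `σ > 0` such that `U*(δ,σ) > R − 1 ≥ U^{out,*}(γ)`
for every `γ ≥ 0` — an audit ensuring full coverage. -/
lemma testFn_bounds (δ σ x : ℝ) : 0 ≤ testFn δ σ x ∧ testFn δ σ x ≤ 1 := by
  unfold testFn stdNormalCDF
  constructor
  · have := ProbabilityTheory.cdf_le_one (ProbabilityTheory.gaussianReal 0 1) ((δ - x)/σ)
    linarith
  · have := ProbabilityTheory.cdf_nonneg (ProbabilityTheory.gaussianReal 0 1) ((δ - x)/σ)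
    linarith

lemma G_le (α c R : ℝ) (hα0 : 0 < α) (hα1 : α < 1) (hc : 0 < c) (hR : 0 < R)
    (δ σ x : ℝ) (hx : 0 ≤ x) : Gfun α c R δ σ x ≤ R := by
  obtain ⟨hp0, hp1⟩ := testFn_bounds δ σ x
  set p := testFn δ σ x with hp
  have hden : 0 < 1 - α + α * p := by nlinarith
  have h1 : p * R / (1 - α + α * p) ≤ R := by
    rw [div_le_iff₀ hden]
    nlinarith [mul_nonneg (mul_nonneg hR.le (by linarith : (0:ℝ) ≤ 1 - α)) (by linarith : (0:ℝ) ≤ 1 - p)]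
  have h2 : -c * x ≤ 0 := by nlinarith
  unfold Gfun
  rw [← hp]
  linarith

lemma G_approx (α c R : ℝ) (hα0 : 0 < α) (hα1 : α < 1) (hc : 0 < c) (hR : 0 < R)
    (ε : ℝ) (hε : 0 < ε) :
    ∃ x, 0 ≤ x ∧ ∃ δ, 0 ≤ δ ∧ ∃ σ, 0 < σ ∧ R - ε < Gfun α c R δ σ x := by
  have htend := ProbabilityTheory.tendsto_cdf_atBot (μ := ProbabilityTheory.gaussianReal 0 1)
  have hev : ∀ᶠ t in Filter.atBot,
      ProbabilityTheory.cdf (ProbabilityTheory.gaussianReal 0 1) t < ε/(2*R) := by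
    exact htend.eventually (Iio_mem_nhds (by positivity))
  obtain ⟨t, ht1, ht2⟩ := (hev.and (Filter.eventually_le_atBot (-1 : ℝ))).exists
  have htneg : t < 0 := by linarith
  set x : ℝ := ε / (2 * c) with hxdef
  have hx0 : 0 < x := by positivity
  refine ⟨x, hx0.le, 0, le_refl 0, x / (-t), div_pos hx0 (by linarith), ?_⟩
  have harg : (0 - x) / (x / (-t)) = t := by
    field_simp
    ring
  have hp : testFn 0 (x / (-t)) x = 1 - ProbabilityTheory.cdf (ProbabilityTheory.gaussianReal 0 1) t := by
    unfold testFn stdNormalCDF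
    rw [harg]
  set Φt := ProbabilityTheory.cdf (ProbabilityTheory.gaussianReal 0 1) t with hΦ
  have hΦ0 : 0 ≤ Φt := ProbabilityTheory.cdf_nonneg _ _
  have hΦ1 : Φt ≤ 1 := ProbabilityTheory.cdf_le_one _ _
  unfold Gfun
  rw [hp]
  set p : ℝ := 1 - Φt with hpdef
  have hp0 : 0 ≤ p := by linarith
  have hp1 : p ≤ 1 := by linarith
  have hden : 0 < 1 - α + α * p := by nlinarith
  have hkey : R - R * (1 - p) ≤ p * R / (1 - α + α * p) := by
    rw [le_div_iff₀ hden]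
    nlinarith [mul_nonneg (mul_nonneg hR.le hp0) (mul_nonneg hα0.le (by linarith : (0:ℝ) ≤ 1 - p))]
  have hcx : c * x = ε / 2 := by
    rw [hxdef]; field_simp
  have hRp : R * (1 - p) < ε / 2 := by
    have : Φt < ε / (2 * R) := ht1
    have h1p : (1 : ℝ) - p = Φt := by rw [hpdef]; ring
    rw [h1p]
    calc R * Φt < R * (ε / (2 * R)) := by
          exact mul_lt_mul_of_pos_left this hR
      _ = ε / 2 := by field_simp
  have : -c * x = -(ε/2) := by rw [neg_mul, hcx]
  linarith


theorem full_coverage_exists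
    (α c R : ℝ) (hα0 : 0 < α) (hα1 : α < 1) (hc : 0 < c) (hR : 0 < R)
    (μZ σZ : ℝ → ℝ)
    (hμ : ∀ x, 0 ≤ x → 0 ≤ μZ x) (hσ : ∀ x, 0 ≤ x → 0 ≤ σZ x) :
    sSup {v : ℝ | ∃ x, 0 ≤ x ∧ ∃ δ, 0 ≤ δ ∧ ∃ σ, 0 < σ ∧ v = Gfun α c R δ σ x} = R ∧
    (∀ γ : ℝ, 0 ≤ γ → optOut R c μZ σZ γ ≤ R - 1) ∧
    ∃ δ, 0 ≤ δ ∧ ∃ σ, 0 < σ ∧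
      (R - 1 < optIn α c R δ σ ∧ ∀ γ : ℝ, 0 ≤ γ → optOut R c μZ σZ γ ≤ R - 1) := by
  -- bound for opt-out
  have hout : ∀ γ : ℝ, 0 ≤ γ → optOut R c μZ σZ γ ≤ R - 1 := by
    intro γ hγ
    apply csSup_le
    · exact ⟨_, ⟨0, by simp, rfl⟩⟩
    · rintro v ⟨x, hx, rfl⟩
      have h1 : 0 ≤ γ * μZ x + γ ^ 2 * (σZ x) ^ 2 / 2 := by
        have := hμ x hx
        positivity
      have h2 : (1:ℝ) ≤ Real.exp (γ * μZ x + γ ^ 2 * (σZ x) ^ 2 / 2) := Real.one_le_exp h1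
      have h3 : 0 ≤ c * x := mul_nonneg hc.le hx
      simp only []
      linarith
  -- the supremum over all parameters is R
  have hSup : sSup {v : ℝ | ∃ x, 0 ≤ x ∧ ∃ δ, 0 ≤ δ ∧ ∃ σ, 0 < σ ∧ v = Gfun α c R δ σ x} = R := by
    apply le_antisymm
    · apply csSup_le
      · exact ⟨Gfun α c R 0 1 0, 0, le_refl 0, 0, le_refl 0, 1, one_pos, rfl⟩
      · rintro v ⟨x, hx, δ, hδ, σ, hσ, rfl⟩
        exact G_le α c R hα0 hα1 hc hR δ σ x hx
    · apply le_of_forall_lt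
      intro w hw
      obtain ⟨x, hx, δ, hδ, σ, hσ, hG⟩ := G_approx α c R hα0 hα1 hc hR (R - w) (by linarith)
      have hmem : Gfun α c R δ σ x ∈
          {v : ℝ | ∃ x, 0 ≤ x ∧ ∃ δ, 0 ≤ δ ∧ ∃ σ, 0 < σ ∧ v = Gfun α c R δ σ x} :=
        ⟨x, hx, δ, hδ, σ, hσ, rfl⟩
      have hbdd : BddAbove {v : ℝ | ∃ x, 0 ≤ x ∧ ∃ δ, 0 ≤ δ ∧ ∃ σ, 0 < σ ∧ v = Gfun α c R δ σ x} := by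
        refine ⟨R, ?_⟩
        rintro v ⟨x, hx, δ, hδ, σ, hσ, rfl⟩
        exact G_le α c R hα0 hα1 hc hR δ σ x hx
      calc w = R - (R - w) := by ring
        _ < Gfun α c R δ σ x := hG
        _ ≤ _ := le_csSup hbdd hmem
  refine ⟨hSup, hout, ?_⟩
  obtain ⟨x, hx, δ, hδ, σ, hσ, hG⟩ := G_approx α c R hα0 hα1 hc hR 1 one_pos
  refine ⟨δ, hδ, σ, hσ, ?_, hout⟩
  have hbdd : BddAbove ((fun x => Gfun α c R δ σ x) '' {x | 0 ≤ x}) := by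
    refine ⟨R, ?_⟩
    rintro v ⟨x, hx, rfl⟩
    exact G_le α c R hα0 hα1 hc hR δ σ x hx
  have hmem : Gfun α c R δ σ x ∈ (fun x => Gfun α c R δ σ x) '' {x | 0 ≤ x} := ⟨x, hx, rfl⟩
  calc R - 1 < Gfun α c R δ σ x := hG
    _ ≤ optIn α c R δ σ := le_csSup hbdd hmem
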